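/- If C is a projective [n,k] code over GF(q) with generator matrix G having columns g₁,...,gₙ ∈ GF(q)^k, then for every weight w, the number of codewords of C(q|q^ℓ) of Hamming weight w equals the number of ℓ×k matrices B over GF(q) such that the kernel of B (as a subspace of GF(q)^k) intersects {g₁,...,gₙ} in exactly n−w elements. -/

import Mathlib

open Finset

/-- Hamming weight of a vector. -/
noncomputable def wt {ι R : Type*} [Fintype ι] [Zero R] (c : ι → R) : ℕ :=
  Set.ncard {j | c j ≠ 0}

/-- The lifted code `C(q|q^ℓ)`: the `E`-span of (the image in `E^n` of) a code `C ⊆ F^n`. -/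
noncomputable def liftCode (F : Type*) {ι : Type*} (E : Type*) [Field F] [Field E] [Algebra F E]
    (C : Submodule F (ι → F)) : Submodule E (ι → E) :=
  Submodule.span E ((fun c : ι → F => fun j => algebraMap F E (c j)) '' (C : Set (ι → F)))

/-- `A_i(C)`: the number of codewords of Hamming weight `i`. -/
noncomputable def numWt {ι R : Type*} [Fintype ι] [Semiring R] (C : Submodule R (ι → R)) (i : ℕ) : ℕ :=
  Set.ncard {c : ι → R | c ∈ C ∧ wt c = i}

/-- The set of supports of weight-`i` codewords of `C` (without repetition). -/
def codeSupports {ι R : Type*} [Fintype ι] [Semiring R] (C : Submodule R (ι → R)) (i : ℕ) :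
    Set (Set ι) :=
  {s | ∃ c, c ∈ C ∧ wt c = i ∧ s = {j | c j ≠ 0}}

/-- `C` has minimum Hamming distance `d`. -/
def IsMinDist {ι R : Type*} [Fintype ι] [Semiring R] (C : Submodule R (ι → R)) (d : ℕ) : Prop :=
  (∃ c, c ∈ C ∧ c ≠ 0 ∧ wt c = d) ∧ ∀ c, c ∈ C → c ≠ 0 → d ≤ wt c

/-- The dual code under the standard bilinear form. -/
def dualCode {ι R : Type*} [Fintype ι] [CommRing R] (C : Submodule R (ι → R)) :
    Submodule R (ι → R) where
  carrier := {x | ∀ c ∈ C, ∑ j, x j * c j = 0}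
  add_mem' := by
    intro a b ha hb c hc
    simp only [Set.mem_setOf_eq] at *
    simp [Pi.add_apply, add_mul, Finset.sum_add_distrib, ha c hc, hb c hc]
  zero_mem' := by intro c hc; simp
  smul_mem' := by
    intro a x hx c hc
    simp only [Set.mem_setOf_eq] at *
    simp [Pi.smul_apply, smul_eq_mul, mul_assoc, ← Finset.mul_sum, hx c hc]

/-- Evaluation of multivariate polynomials over `GF(2)` as a linear map. -/
noncomputable def evalLM (m : ℕ) :
    MvPolynomial (Fin m) (ZMod 2) →ₗ[ZMod 2] ((Fin m → ZMod 2) → ZMod 2) where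
  toFun := fun p x => MvPolynomial.eval x p
  map_add' := by intro p q; funext x; simp
  map_smul' := by intro a p; funext x; simp

/-- The binary Reed-Muller code `RM₂(r,m)`: evaluations of polynomials of total degree `≤ r`. -/
noncomputable def RM (r m : ℕ) : Submodule (ZMod 2) ((Fin m → ZMod 2) → ZMod 2) :=
  Submodule.map (evalLM m) (MvPolynomial.restrictTotalDegree (Fin m) (ZMod 2) r)

-- helper lemmas

lemma wt_eq_card {ι R : Type*} [Fintype ι] [DecidableEq R] [Zero R] (c : ι → R) :
    wt c = (Finset.univ.filter (fun j => c j ≠ 0)).card := by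
  classical
  rw [wt, Set.ncard_eq_toFinset_card']
  congr 1
  ext j
  simp

lemma wt_eq_zero_iff {ι R : Type*} [Fintype ι] [Zero R] (c : ι → R) :
    wt c = 0 ↔ c = 0 := by
  classical
  rw [wt_eq_card]
  simp only [Finset.card_eq_zero, Finset.filter_eq_empty_iff, Finset.mem_univ, true_imp_iff,
    not_not]
  exact ⟨fun h => funext fun j => @h j, fun h _ => by simp [h]⟩


/-- for a projective `[n,k]` code with generator matrix `G` (columns `g₁,…,gₙ`),
`A_w(C(q|q^ℓ))` equals the number of `ℓ×k` matrices `B` over `F` whose kernel meets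
`{g₁,…,gₙ}` in exactly `n-w` elements. -/
theorem stmt4 {F E : Type*} [Field F] [Field E] [Algebra F E] {n k ℓ : ℕ}
    (G : Matrix (Fin k) (Fin n) F)
    (hrank : LinearIndependent F (fun i : Fin k => G i))
    (hproj : ∀ j1 j2 : Fin n, j1 ≠ j2 → ∀ a : F,
      (fun i => G i j1) ≠ a • (fun i => G i j2))
    (hE : Module.finrank F E = ℓ)
    (w : ℕ) (hw : w ≤ n) :
    numWt (Submodule.span E
        (Set.range fun i : Fin k => fun j : Fin n => algebraMap F E (G i j))) w
      = Set.ncard {B : Matrix (Fin ℓ) (Fin k) F |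
          Set.ncard ({g : Fin k → F | B.mulVec g = 0} ∩
            Set.range fun j : Fin n => fun i => G i j) = n - w} := by
  classical
  set col : Fin n → (Fin k → F) := fun j i => G i j with hcoldef
  have hcolinj : Function.Injective col := by
    intro j1 j2 h
    by_contra hne
    exact hproj j1 j2 hne 1 (by simpa using h)
  set C : Submodule E (Fin n → E) := Submodule.span E
      (Set.range fun i : Fin k => fun j : Fin n => algebraMap F E (G i j)) with hC
  -- the intersection in the RHS, rewritten as an image
  have hinter : ∀ B : Matrix (Fin ℓ) (Fin k) F,
      ({g : Fin k → F | B.mulVec g = 0} ∩ Set.range col)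
        = col '' {j : Fin n | B.mulVec (col j) = 0} := by
    intro B
    ext g
    constructor
    · rintro ⟨hg, j, rfl⟩
      exact ⟨j, hg, rfl⟩
    · rintro ⟨j, hj, rfl⟩
      exact ⟨hj, j, rfl⟩
  have hintercard : ∀ B : Matrix (Fin ℓ) (Fin k) F,
      Set.ncard ({g : Fin k → F | B.mulVec g = 0} ∩ Set.range col)
        = (Finset.univ.filter (fun j : Fin n => B.mulVec (col j) = 0)).card := by
    intro B
    rw [hinter B, Set.ncard_image_of_injective _ hcolinj, Set.ncard_eq_toFinset_card']
    congr 1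
    ext j
    simp
  by_cases hfin : Module.Finite F E
  · haveI : FiniteDimensional F E := hfin
    let b : Module.Basis (Fin ℓ) F E := Module.finBasisOfFinrankEq F E hE
    have hblin := Fintype.linearIndependent_iff.mp b.linearIndependent
    set Φ : Matrix (Fin ℓ) (Fin k) F → (Fin n → E) :=
      fun B j => ∑ t, (B.mulVec (col j) t) • b t with hΦ
    have key : ∀ (B : Matrix (Fin ℓ) (Fin k) F) (j : Fin n),
        Φ B j = 0 ↔ B.mulVec (col j) = 0 := by
      intro B j
      constructor
      · intro h
        funext t
        exact hblin _ h t
      · intro h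
        simp [hΦ, h]
    have hcompute : ∀ (B : Matrix (Fin ℓ) (Fin k) F) (j : Fin n),
        ∑ i, (∑ t, (B t i) • b t) * algebraMap F E (G i j) = Φ B j := by
      intro B j
      rw [hΦ]
      simp only [Finset.sum_mul]
      rw [Finset.sum_comm]
      refine Finset.sum_congr rfl fun t _ => ?_
      have hterm : ∀ i : Fin k, (B t i • b t) * algebraMap F E (G i j)
          = (B t i * G i j) • b t := by
        intro i
        rw [smul_mul_assoc, ← Algebra.commutes (G i j) (b t), ← Algebra.smul_def, smul_smul]
      simp only [hterm]
      rw [← Finset.sum_smul]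
      congr 1
    have hmem : ∀ B : Matrix (Fin ℓ) (Fin k) F, Φ B ∈ C := by
      intro B
      rw [hC, Submodule.mem_span_range_iff_exists_fun]
      refine ⟨fun i => ∑ t, (B t i) • b t, ?_⟩
      funext j
      simpa [Finset.sum_apply, Pi.smul_apply, smul_eq_mul] using hcompute B j
    have hsurj : ∀ c ∈ C, ∃ B : Matrix (Fin ℓ) (Fin k) F, Φ B = c := by
      intro c hc
      rw [hC, Submodule.mem_span_range_iff_exists_fun] at hc
      obtain ⟨x, hx⟩ := hc
      refine ⟨Matrix.of fun t i => b.repr (x i) t, ?_⟩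
      funext j
      rw [← hcompute]
      have hrep : ∀ i : Fin k, ∑ t, (b.repr (x i) t) • b t = x i := fun i => b.sum_repr (x i)
      simp only [Matrix.of_apply, hrep]
      have := congrFun hx j
      simpa [Finset.sum_apply, Pi.smul_apply, smul_eq_mul] using this
    have hinj : Function.Injective Φ := by
      intro B1 B2 h
      have hmveq : ∀ j, B1.mulVec (col j) = B2.mulVec (col j) := by
        intro j
        have hj := congrFun h j
        simp only [hΦ] at hj
        have h0 : ∑ t, (B1.mulVec (col j) t - B2.mulVec (col j) t) • b t = 0 := by
          simp only [sub_smul, Finset.sum_sub_distrib]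
          rw [hj, sub_self]
        funext t
        have := hblin _ h0 t
        exact sub_eq_zero.mp this
      funext t i
      have hrow := Fintype.linearIndependent_iff.mp hrank (fun i => B1 t i - B2 t i) ?_ i
      · exact sub_eq_zero.mp hrow
      · funext j
        have := congrFun (hmveq j) t
        simp only [Matrix.mulVec, dotProduct] at this
        simp only [Finset.sum_apply, Pi.smul_apply, smul_eq_mul, sub_mul, Pi.zero_apply,
          Finset.sum_sub_distrib]
        rw [this, sub_self]
    -- weight of Φ B
    have hwt : ∀ B : Matrix (Fin ℓ) (Fin k) F,
        wt (Φ B) + (Finset.univ.filter (fun j : Fin n => B.mulVec (col j) = 0)).card = n := by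
      intro B
      rw [wt_eq_card]
      have : (Finset.univ.filter (fun j : Fin n => Φ B j ≠ 0))
          = Finset.univ.filter (fun j : Fin n => ¬ B.mulVec (col j) = 0) := by
        apply Finset.filter_congr
        intro j _
        rw [not_iff_not]
        exact key B j
      rw [this]
      have := Finset.card_filter_add_card_filter_not
        (s := (Finset.univ : Finset (Fin n))) (p := fun j : Fin n => B.mulVec (col j) = 0)
      simp only [Finset.card_univ, Fintype.card_fin] at this
      omega
    have hcardle : ∀ B : Matrix (Fin ℓ) (Fin k) F,
        (Finset.univ.filter (fun j : Fin n => B.mulVec (col j) = 0)).card ≤ n := by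
      intro B
      calc _ ≤ (Finset.univ : Finset (Fin n)).card := Finset.card_filter_le _ _
        _ = n := by simp
    have himg : Φ '' {B : Matrix (Fin ℓ) (Fin k) F |
          Set.ncard ({g : Fin k → F | B.mulVec g = 0} ∩ Set.range col) = n - w}
        = {c : Fin n → E | c ∈ C ∧ wt c = w} := by
      ext c
      constructor
      · rintro ⟨B, hB, rfl⟩
        simp only [Set.mem_setOf_eq, hintercard B] at hB
        refine ⟨hmem B, ?_⟩
        have := hwt B
        have := hcardle B
        omega
      · rintro ⟨hcC, hcw⟩
        obtain ⟨B, rfl⟩ := hsurj c hcC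
        refine ⟨B, ?_, rfl⟩
        simp only [Set.mem_setOf_eq, hintercard B]
        have := hwt B
        omega
    rw [numWt, ← himg, Set.ncard_image_of_injective _ hinj]
  · -- degenerate case: ℓ = 0 and E is infinite
    have hℓ : ℓ = 0 := by rw [← hE, Module.finrank_of_not_finite hfin]
    have hEinf : Infinite E := by
      by_contra h
      rw [not_infinite_iff_finite] at h
      exact hfin inferInstance
    subst hℓ
    -- every matrix satisfies B.mulVec g = 0
    have hmv : ∀ (B : Matrix (Fin 0) (Fin k) F) (g : Fin k → F), B.mulVec g = 0 := by
      intro B g; funext t; exact t.elim0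
    have hRHS : {B : Matrix (Fin 0) (Fin k) F |
          Set.ncard ({g : Fin k → F | B.mulVec g = 0} ∩ Set.range col) = n - w}
        = if w = 0 then Set.univ else ∅ := by
      have hcardn : ∀ B : Matrix (Fin 0) (Fin k) F,
          Set.ncard ({g : Fin k → F | B.mulVec g = 0} ∩ Set.range col) = n := by
        intro B
        rw [hintercard B]
        rw [Finset.filter_true_of_mem (fun j _ => hmv B (col j))]
        simp
      ext B
      simp only [Set.mem_setOf_eq, hcardn B]
      split_ifs with h
      · subst h; simp
      · simp only [Set.mem_empty_iff_false, iff_false]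
        omega
    rw [hRHS]
    split_ifs with hw0
    · subst hw0
      have hL : {c : Fin n → E | c ∈ C ∧ wt c = 0} = {0} := by
        ext c
        simp only [Set.mem_setOf_eq, Set.mem_singleton_iff, wt_eq_zero_iff]
        exact ⟨fun h => h.2, fun h => ⟨h ▸ C.zero_mem, h⟩⟩
      rw [numWt, hL, Set.ncard_singleton, Set.ncard_univ]
      haveI : Unique (Matrix (Fin 0) (Fin k) F) :=
        ⟨⟨fun t => t.elim0⟩, fun B => by funext t; exact t.elim0⟩
      simp [Nat.card_unique]
    · -- weight w > 0: the set of codewords is empty or infinite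
      rw [Set.ncard_empty, numWt]
      by_cases hne : {c : Fin n → E | c ∈ C ∧ wt c = w} = ∅
      · rw [hne, Set.ncard_empty]
      · obtain ⟨c, hcC, hcw⟩ := Set.nonempty_iff_ne_empty.mpr hne
        have hc0 : c ≠ 0 := by
          intro h
          exact hw0 (by rw [← hcw, h, wt_eq_zero_iff])
        obtain ⟨j0, hj0⟩ : ∃ j, c j ≠ 0 := by
          by_contra h
          push_neg at h
          exact hc0 (funext fun j => h j)
        have hinfset : Set.Infinite {c : Fin n → E | c ∈ C ∧ wt c = w} := by
          apply Set.infinite_of_injOn_mapsTo (f := fun a : E => a • c) (s := {a : E | a ≠ 0})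
          · intro a ha a' ha' h
            have := congrFun h j0
            simp only [Pi.smul_apply, smul_eq_mul] at this
            exact mul_right_cancel₀ hj0 this
          · intro a ha
            refine ⟨C.smul_mem a hcC, ?_⟩
            rw [← hcw]
            unfold wt
            congr 1
            ext j
            simp only [Set.mem_setOf_eq, Pi.smul_apply, smul_eq_mul]
            rw [mul_ne_zero_iff]
            exact ⟨fun h => h.2, fun h => ⟨ha, h⟩⟩
          · exact Set.Finite.infinite_compl (Set.finite_singleton (0:E)) |>.mono
              (by intro a ha; exact ha)
        rw [hinfset.ncard]
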